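/- Let S be a feasible synchronized schedule executing processing-time-inclusive jobs j_1,…,j_k with processing times p_1,…,p_k and weights w_1,…,w_k, in this order, on a shared processor M, and let i ∈ {1,…,k−1}. Let S' be the synchronized schedule obtained from S by exchanging jobs j_i and j_{i+1}, so that the order on M is j_1,…,j_{i−1}, j_{i+1}, j_i, j_{i+2},…,j_k, with all other processors unchanged. Then S' is feasible and Ω(S) − Ω(S') = (w_{i+1} − w_i)·T_i/4 + (p_i − p_{i+1})·Σ_{ℓ=i+2}^{k} w_ℓ/2^{ℓ+1−i} + (w_i·p_{i+1} − w_{i+1}·p_i)/4, where T_i = Σ_{ℓ=1}^{i−1} p_ℓ/2^{i−ℓ} is computed from the original order. -/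

import Mathlib

/-- Start times on a shared processor for a sequence of processing times `q`:
`Tseq q 0 = 0` and `Tseq q (i+1) = (Tseq q i + q_i)/2`; job `i` (0-indexed)
occupies the shared processor during `(Tseq q i, Tseq q (i+1))`. -/
noncomputable def Tseq (q : List ℝ) : ℕ → ℝ
  | 0 => 0
  | i + 1 => (Tseq q i + q.getD i 0) / 2

/-- A sequence of processing times is feasible on a shared processor if every
job is long enough: `q_i > T_i`. -/
def ListFeasible (q : List ℝ) : Prop :=
  ∀ i < q.length, Tseq q i < q.getD i 0

/-- Total weighted overlap of one shared processor executing jobs with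
processing times `q` and weights `v` (in this order): the overlap of the `i`-th
job is `(q_i - T_i)/2`. -/
noncomputable def listOverlap (q v : List ℝ) : ℝ :=
  ∑ i ∈ Finset.range q.length, v.getD i 0 * (q.getD i 0 - Tseq q i) / 2

/-- A synchronized schedule: each of the `m` shared processors gets a finite
sequence of distinct jobs, and each job appears on at most one shared processor
(jobs appearing nowhere execute on their private processors only). -/
structure SyncSchedule (J : Type) (m : ℕ) where
  seq : Fin m → List J
  nodup : ∀ i, (seq i).Nodup
  disj : ∀ i i' j, j ∈ seq i → j ∈ seq i' → i = i'

namespace SyncSchedule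

variable {J : Type} {m : ℕ}

/-- Feasibility of a synchronized schedule for processing times `p`. -/
def Feasible (p : J → ℝ) (S : SyncSchedule J m) : Prop :=
  ∀ i, ListFeasible ((S.seq i).map p)

/-- Total weighted overlap of a synchronized schedule. -/
noncomputable def Omega (p w : J → ℝ) (S : SyncSchedule J m) : ℝ :=
  ∑ i, listOverlap ((S.seq i).map p) ((S.seq i).map w)

/-- A feasible synchronized schedule is optimal if it maximizes the total
weighted overlap among all feasible synchronized schedules. -/
def Optimal (p w : J → ℝ) (S : SyncSchedule J m) : Prop :=
  S.Feasible p ∧ ∀ S' : SyncSchedule J m, S'.Feasible p → S'.Omega p w ≤ S.Omega p w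

end SyncSchedule

/-- A finite collection of processing times (given as a list `q`) is
*processing-time-inclusive* if, for its ascending sort `s = [q_1, …, q_k]`,
`Σ_{ℓ=1}^{k-1} q_{ℓ+1} / 2^(k-ℓ) < q_1`; i.e. the makespan of all but the
shortest job scheduled in ascending order is shorter than the shortest job. -/
def PTInclusive (q : List ℝ) : Prop :=
  ∃ s : List ℝ, s.Perm q ∧ s.Pairwise (· ≤ ·) ∧
    ∑ ℓ ∈ Finset.range (s.length - 1), s.getD (ℓ + 1) 0 / 2 ^ (s.length - 1 - ℓ)
      < s.getD 0 0

lemma tseq_closed (q : List ℝ) : ∀ n, Tseq q n = (∑ ℓ ∈ Finset.range n, q.getD ℓ 0 * 2 ^ ℓ) / 2 ^ n := by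
  intro n
  induction n with
  | zero => simp [Tseq]
  | succ n ih =>
    rw [Tseq, ih, Finset.sum_range_succ, pow_succ]
    field_simp

lemma tseq_congr {q q' : List ℝ} (n : ℕ) (h : ∀ ℓ < n, q.getD ℓ 0 = q'.getD ℓ 0) :
    Tseq q n = Tseq q' n := by
  rw [tseq_closed, tseq_closed]
  congr 1
  exact Finset.sum_congr rfl fun ℓ hℓ => by rw [h ℓ (Finset.mem_range.mp hℓ)]

lemma getD_ab (A B : List ℝ) (a b : ℝ) (ℓ : ℕ) :
    (A ++ a :: b :: B).getD ℓ 0 =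
      if ℓ < A.length then A.getD ℓ 0
      else if ℓ = A.length then a
      else if ℓ = A.length + 1 then b
      else B.getD (ℓ - (A.length + 2)) 0 := by
  split_ifs with h1 h2 h3
  · exact List.getD_append _ _ _ _ h1
  · subst h2
    rw [List.getD_append_right _ _ _ _ (le_refl _), Nat.sub_self]
    rfl
  · subst h3
    rw [List.getD_append_right _ _ _ _ (by omega), Nat.add_sub_cancel_left]
    rfl
  · rw [List.getD_append_right _ _ _ _ (by omega)]
    have : ℓ - A.length = (ℓ - (A.length + 2)) + 2 := by omega
    rw [this]
    rfl

lemma tseq_swap_eq (A B : List ℝ) (a b : ℝ) {n : ℕ} (hn : n ≤ A.length) :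
    Tseq (A ++ b :: a :: B) n = Tseq (A ++ a :: b :: B) n := by
  apply tseq_congr
  intro ℓ hℓ
  rw [getD_ab, getD_ab]
  have : ℓ < A.length := by omega
  simp [this]

lemma tseq_swap_diff (A B : List ℝ) (a b : ℝ) {n : ℕ} (hn : A.length + 2 ≤ n) :
    Tseq (A ++ b :: a :: B) n = Tseq (A ++ a :: b :: B) n + (a - b) * 2 ^ A.length / 2 ^ n := by
  rw [tseq_closed, tseq_closed]
  have key : ∀ ℓ ∈ Finset.range n,
      (A ++ b :: a :: B).getD ℓ 0 * 2 ^ ℓ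
        = (A ++ a :: b :: B).getD ℓ 0 * 2 ^ ℓ
          + ((if ℓ = A.length then (b - a : ℝ) * 2 ^ ℓ else 0)
             + (if ℓ = A.length + 1 then (a - b : ℝ) * 2 ^ ℓ else 0)) := by
    intro ℓ _
    rw [getD_ab, getD_ab]
    split_ifs with h1 h2 h3 <;> first | ring1 | (exfalso; omega)
  rw [Finset.sum_congr rfl key, Finset.sum_add_distrib, Finset.sum_add_distrib,
    Finset.sum_ite_eq' (Finset.range n) A.length (fun ℓ => ((b - a) * 2 ^ ℓ : ℝ)),
    Finset.sum_ite_eq' (Finset.range n) (A.length + 1) (fun ℓ => ((a - b) * 2 ^ ℓ : ℝ))]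
  rw [if_pos (Finset.mem_range.mpr (by omega)), if_pos (Finset.mem_range.mpr (by omega))]
  rw [pow_succ]
  ring


lemma overlap_swap_aux (A B C D : List ℝ) (a b c d : ℝ)
    (hC : C.length = A.length) (hD : D.length = B.length) :
    listOverlap (A ++ a :: b :: B) (C ++ c :: d :: D)
      - listOverlap (A ++ b :: a :: B) (C ++ d :: c :: D)
    = (d - c) * Tseq (A ++ a :: b :: B) A.length / 4
      + (a - b) * ∑ ℓ ∈ Finset.Ico (A.length + 2) (A.length + 2 + B.length),
          (C ++ c :: d :: D).getD ℓ 0 / 2 ^ (ℓ + 1 - A.length)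
      + (c * b - d * a) / 4 := by
  have hql : (A ++ a :: b :: B).length = A.length + 2 + B.length := by simp; omega
  have hq'l : (A ++ b :: a :: B).length = A.length + 2 + B.length := by simp; omega
  set i := A.length with hi
  set k := i + 2 + B.length with hk
  rw [listOverlap, listOverlap, hql, hq'l, ← Finset.sum_sub_distrib]
  rw [Finset.range_eq_Ico,
    ← Finset.sum_Ico_consecutive _ (Nat.zero_le (i + 2)) (by omega : i + 2 ≤ k),
    ← Finset.range_eq_Ico, Finset.sum_range_succ, Finset.sum_range_succ]
  have h0 : ∑ ℓ ∈ Finset.range i,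
      ((C ++ c :: d :: D).getD ℓ 0 * ((A ++ a :: b :: B).getD ℓ 0 - Tseq (A ++ a :: b :: B) ℓ) / 2
        - (C ++ d :: c :: D).getD ℓ 0 * ((A ++ b :: a :: B).getD ℓ 0 - Tseq (A ++ b :: a :: B) ℓ) / 2)
      = 0 := by
    apply Finset.sum_eq_zero
    intro ℓ hℓ
    have hℓi : ℓ < i := Finset.mem_range.mp hℓ
    rw [tseq_swap_eq A B a b (by omega), getD_ab A B, getD_ab A B, getD_ab C D, getD_ab C D]
    rw [hC]
    simp only [if_pos hℓi, if_pos (show ℓ < A.length from hℓi)]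
    ring
  have hqa : (A ++ a :: b :: B).getD i 0 = a := by rw [getD_ab]; simp [← hi]
  have hqb : (A ++ a :: b :: B).getD (i + 1) 0 = b := by rw [getD_ab]; simp [← hi]
  have hq'b : (A ++ b :: a :: B).getD i 0 = b := by rw [getD_ab]; simp [← hi]
  have hq'a : (A ++ b :: a :: B).getD (i + 1) 0 = a := by rw [getD_ab]; simp [← hi]
  have hvc : (C ++ c :: d :: D).getD i 0 = c := by rw [getD_ab, hC]; simp
  have hvd : (C ++ c :: d :: D).getD (i + 1) 0 = d := by rw [getD_ab, hC]; simp
  have hv'd : (C ++ d :: c :: D).getD i 0 = d := by rw [getD_ab, hC]; simp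
  have hv'c : (C ++ d :: c :: D).getD (i + 1) 0 = c := by rw [getD_ab, hC]; simp
  have hT : Tseq (A ++ b :: a :: B) i = Tseq (A ++ a :: b :: B) i :=
    tseq_swap_eq A B a b le_rfl
  have hT1 : Tseq (A ++ a :: b :: B) (i + 1) = (Tseq (A ++ a :: b :: B) i + a) / 2 := by
    rw [Tseq, hqa]
  have hT1' : Tseq (A ++ b :: a :: B) (i + 1) = (Tseq (A ++ a :: b :: B) i + b) / 2 := by
    rw [Tseq, hq'b, hT]
  have hIco : ∑ ℓ ∈ Finset.Ico (i + 2) k,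
      ((C ++ c :: d :: D).getD ℓ 0 * ((A ++ a :: b :: B).getD ℓ 0 - Tseq (A ++ a :: b :: B) ℓ) / 2
        - (C ++ d :: c :: D).getD ℓ 0 * ((A ++ b :: a :: B).getD ℓ 0 - Tseq (A ++ b :: a :: B) ℓ) / 2)
      = (a - b) * ∑ ℓ ∈ Finset.Ico (i + 2) k,
          (C ++ c :: d :: D).getD ℓ 0 / 2 ^ (ℓ + 1 - i) := by
    rw [Finset.mul_sum]
    apply Finset.sum_congr rfl
    intro ℓ hℓ
    have hℓ2 : i + 2 ≤ ℓ := (Finset.mem_Ico.mp hℓ).1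
    have hv' : (C ++ d :: c :: D).getD ℓ 0 = (C ++ c :: d :: D).getD ℓ 0 := by
      rw [getD_ab, getD_ab, hC]
      have h1 : ¬ ℓ < i := by omega
      have h2 : ℓ ≠ i := by omega
      have h3 : ℓ ≠ i + 1 := by omega
      simp [h1, h2, h3]
    have hq' : (A ++ b :: a :: B).getD ℓ 0 = (A ++ a :: b :: B).getD ℓ 0 := by
      rw [getD_ab, getD_ab]
      have h1 : ¬ ℓ < i := by omega
      have h2 : ℓ ≠ i := by omega
      have h3 : ℓ ≠ i + 1 := by omega
      simp [h1, h2, h3, ← hi]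
    rw [hv', hq', tseq_swap_diff A B a b (by omega : A.length + 2 ≤ ℓ)]
    have hpow : (2 : ℝ) ^ (ℓ + 1 - i) * 2 ^ i = 2 ^ (ℓ + 1) := by
      rw [← pow_add]
      congr 1
      omega
    have h2i : (2 : ℝ) ^ i ≠ 0 := by positivity
    have h2ℓ : (2 : ℝ) ^ ℓ ≠ 0 := by positivity
    have h2ℓi : (2 : ℝ) ^ (ℓ + 1 - i) ≠ 0 := by positivity
    have hpow2 : (2 : ℝ) ^ (ℓ + 1 - i) * 2 ^ A.length = 2 ^ ℓ * 2 := by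
      rw [← pow_add, show ℓ + 1 - i + A.length = ℓ + 1 by omega, pow_succ]
    simp only [List.getD]
    field_simp
    linear_combination (((C ++ c :: d :: D)[ℓ]?.getD 0) * (a - b)) * hpow2
  rw [h0, hqa, hqb, hq'a, hq'b, hvc, hvd, hv'c, hv'd, hT, hT1, hT1', hIco]
  ring

lemma listFeasible_of_perm (q s : List ℝ) (hqs : q.Perm s) (hsort : s.Pairwise (· ≤ ·))
    (hpos : ∀ x ∈ s, 0 < x)
    (hbound : ∑ ℓ ∈ Finset.range (s.length - 1), s.getD (ℓ + 1) 0 / 2 ^ (s.length - 1 - ℓ)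
      < s.getD 0 0) :
    ListFeasible q := by
  intro i hi
  have hlen : s.length = q.length := hqs.length_eq.symm
  set n := q.length with hn
  have hn0 : 0 < n := lt_of_le_of_lt (Nat.zero_le i) hi
  haveI : NeZero n := ⟨hn0.ne'⟩
  set f : Fin n → ℝ := q.get with hf
  set σ : Equiv.Perm (Fin n) := Tuple.sort f with hσ
  have hmono : Monotone (f ∘ σ) := Tuple.monotone_sort f
  have hofn : List.ofFn (f ∘ σ) = s := by
    apply List.Perm.eq_of_pairwise' hmono.sortedLE_ofFn.pairwise hsort
    refine (σ.ofFn_comp_perm f).trans ?_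
    rw [hf, List.ofFn_get q]
    exact hqs
  have hfs : ∀ t : Fin n, q.get (σ t) = s.getD (t : ℕ) 0 := by
    intro t
    conv_rhs => rw [← hofn]
    rw [List.getD_eq_getElem _ 0 (by simpa using t.2)]
    simp only [List.getElem_ofFn, Fin.eta]
    rfl
  -- coefficient function
  set cfun : Fin n → ℝ := fun t => if n - i ≤ (t : ℕ) then (2 : ℝ) ^ (t : ℕ) / 2 ^ n else 0
    with hcfun
  set gfun : Fin n → ℝ := fun t => s.getD (t : ℕ) 0 with hgfun
  have hsge : ∀ t u : Fin n, t ≤ u → s.getD (t : ℕ) 0 ≤ s.getD (u : ℕ) 0 := by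
    intro t u htu
    have ht : (t : ℕ) < s.length := by rw [hlen]; exact t.2
    have hu : (u : ℕ) < s.length := by rw [hlen]; exact u.2
    rw [List.getD_eq_getElem s 0 ht, List.getD_eq_getElem s 0 hu]
    exact List.Pairwise.rel_get_of_le hsort htu
  have hgmono : Monotone gfun := fun t u htu => hsge t u htu
  have hcmono : Monotone cfun := by
    intro t u htu
    rw [hcfun]
    dsimp only
    split_ifs with h1 h2 h2
    · exact div_le_div_of_nonneg_right (pow_le_pow_right₀ one_le_two htu) (by positivity)
    · exact absurd (le_trans h1 htu) h2
    · positivity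
    · exact le_refl 0
  have hge0 : ∀ t : Fin n, 0 ≤ s.getD (t : ℕ) 0 := by
    intro t
    have ht : (t : ℕ) < s.length := by rw [hlen]; exact t.2
    rw [List.getD_eq_getElem s 0 ht]
    exact le_of_lt (hpos _ (List.getElem_mem ht))
  set c : Fin n := (Fin.ofNat n i) with hc
  have hcval : (c : ℕ) = i := by
    rw [hc, Fin.val_ofNat, Nat.mod_eq_of_lt hi]
  set τ : Equiv.Perm (Fin n) := (Equiv.addRight c).trans σ⁻¹ with hτ
  have hmv : Monovary gfun cfun := hgmono.monovary hcmono
  have key : ∑ t, gfun (τ t) • cfun t ≤ ∑ t, gfun t • cfun t :=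
    hmv.sum_comp_perm_smul_le_sum_smul (σ := τ)
  simp only [smul_eq_mul] at key
  -- identify the left-hand side with `Tseq q i`
  have hτval : ∀ t : Fin n, n - i ≤ (t : ℕ) → ((t + c : Fin n) : ℕ) = (t : ℕ) - (n - i) := by
    intro t ht
    rw [Fin.val_add, hcval]
    have h1 : (t : ℕ) + i = ((t : ℕ) + i - n) + n := by omega
    rw [h1, Nat.add_mod_right, Nat.mod_eq_of_lt (by omega)]
    omega
  have hLHS : ∑ t, gfun (τ t) * cfun t = ∑ ℓ ∈ Finset.range i, q.getD ℓ 0 * 2 ^ ℓ / 2 ^ i := by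
    rw [← Finset.sum_subset
      (Finset.filter_subset (fun t : Fin n => n - i ≤ (t : ℕ)) Finset.univ)
      (by
        intro t _ ht
        rw [Finset.mem_filter] at ht
        push_neg at ht
        have hlt : (t : ℕ) < n - i := ht (Finset.mem_univ t)
        have : cfun t = 0 := if_neg (by omega)
        rw [this, mul_zero])]
    refine Finset.sum_nbij' (fun t : Fin n => (t : ℕ) - (n - i))
      (fun ℓ => (⟨(ℓ + (n - i)) % n, Nat.mod_lt _ hn0⟩ : Fin n)) ?_ ?_ ?_ ?_ ?_
    · intro t ht
      rw [Finset.mem_filter] at ht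
      have htn : (t : ℕ) < n := t.2
      have hti : n - i ≤ (t : ℕ) := ht.2
      refine Finset.mem_range.mpr ?_
      omega
    · intro ℓ hℓ
      have hℓi : ℓ < i := Finset.mem_range.mp hℓ
      rw [Finset.mem_filter]
      refine ⟨Finset.mem_univ _, ?_⟩
      simp only [Nat.mod_eq_of_lt (show ℓ + (n - i) < n by omega)]
      omega
    · intro t ht
      rw [Finset.mem_filter] at ht
      apply Fin.ext
      simp only [Nat.mod_eq_of_lt (show (t : ℕ) - (n - i) + (n - i) < n by omega)]
      omega
    · intro ℓ hℓ
      have hℓi : ℓ < i := Finset.mem_range.mp hℓ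
      simp only [Nat.mod_eq_of_lt (show ℓ + (n - i) < n by omega)]
      omega
    · intro t ht
      rw [Finset.mem_filter] at ht
      have hti : n - i ≤ (t : ℕ) := ht.2
      have hcf : cfun t = (2 : ℝ) ^ (t : ℕ) / 2 ^ n := if_pos hti
      have hgτ : gfun (τ t) = q.getD ((t : ℕ) - (n - i)) 0 := by
        have h1 : τ t = σ⁻¹ (t + c) := rfl
        have h2 := hfs (σ⁻¹ (t + c))
        rw [← Equiv.Perm.mul_apply, mul_inv_cancel, Equiv.Perm.one_apply] at h2
        rw [hgfun]
        dsimp only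
        rw [h1, ← h2]
        have h4 : q.get (t + c) = q.getD (((t + c : Fin n) : ℕ)) 0 :=
          (List.getD_eq_getElem q 0 (t + c).2).symm
        rw [h4, hτval t hti]
      rw [hcf, hgτ]
      have hpow : (2 : ℝ) ^ (t : ℕ) * 2 ^ i = 2 ^ ((t : ℕ) - (n - i)) * 2 ^ n := by
        rw [← pow_add, ← pow_add]
        congr 1
        omega
      have h2n : (2 : ℝ) ^ n ≠ 0 := by positivity
      have h2i : (2 : ℝ) ^ i ≠ 0 := by positivity
      simp only [List.getD]
      field_simp
      linear_combination (q[(t : ℕ) - (n - i)]?.getD 0) * hpow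
  -- bound the right-hand side
  have hRHS : ∑ t, gfun t * cfun t
      ≤ ∑ ℓ ∈ Finset.range (n - 1), s.getD (ℓ + 1) 0 / 2 ^ (n - 1 - ℓ) := by
    have step1 : ∑ t, gfun t * cfun t
        ≤ ∑ t : Fin n, (if 1 ≤ (t : ℕ) then s.getD (t : ℕ) 0 * ((2 : ℝ) ^ (t : ℕ) / 2 ^ n) else 0) := by
      apply Finset.sum_le_sum
      intro t _
      rw [hgfun, hcfun]
      dsimp only
      split_ifs with h1 h2 h2
      · exact le_refl _
      · exfalso; omega
      · rw [mul_zero]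
        have := hge0 t
        positivity
      · rw [mul_zero]
    have step2 : ∑ t : Fin n, (if 1 ≤ (t : ℕ) then s.getD (t : ℕ) 0 * ((2 : ℝ) ^ (t : ℕ) / 2 ^ n) else 0)
        = ∑ ℓ ∈ Finset.range n, (if 1 ≤ ℓ then s.getD ℓ 0 * ((2 : ℝ) ^ ℓ / 2 ^ n) else 0) :=
      Fin.sum_univ_eq_sum_range (fun ℓ => if 1 ≤ ℓ then s.getD ℓ 0 * ((2 : ℝ) ^ ℓ / 2 ^ n) else 0) n
    have step3 : ∑ ℓ ∈ Finset.range n, (if 1 ≤ ℓ then s.getD ℓ 0 * ((2 : ℝ) ^ ℓ / 2 ^ n) else 0)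
        = ∑ ℓ ∈ Finset.Ico 1 n, s.getD ℓ 0 * ((2 : ℝ) ^ ℓ / 2 ^ n) := by
      rw [Finset.range_eq_Ico, ← Finset.sum_Ico_consecutive _ (Nat.zero_le 1) hn0]
      have h01 : ∑ ℓ ∈ Finset.Ico 0 1, (if 1 ≤ ℓ then s.getD ℓ 0 * ((2 : ℝ) ^ ℓ / 2 ^ n) else 0) = 0 := by
        simp
      rw [h01, zero_add]
      apply Finset.sum_congr rfl
      intro ℓ hℓ
      exact if_pos (Finset.mem_Ico.mp hℓ).1
    have step4 : ∑ ℓ ∈ Finset.Ico 1 n, s.getD ℓ 0 * ((2 : ℝ) ^ ℓ / 2 ^ n)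
        = ∑ ℓ ∈ Finset.range (n - 1), s.getD (1 + ℓ) 0 * ((2 : ℝ) ^ (1 + ℓ) / 2 ^ n) :=
      Finset.sum_Ico_eq_sum_range _ 1 n
    have step5 : ∑ ℓ ∈ Finset.range (n - 1), s.getD (1 + ℓ) 0 * ((2 : ℝ) ^ (1 + ℓ) / 2 ^ n)
        = ∑ ℓ ∈ Finset.range (n - 1), s.getD (ℓ + 1) 0 / 2 ^ (n - 1 - ℓ) := by
      apply Finset.sum_congr rfl
      intro ℓ hℓ
      have hℓn : ℓ < n - 1 := Finset.mem_range.mp hℓ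
      rw [Nat.add_comm 1 ℓ]
      have hpow : (2 : ℝ) ^ (n - 1 - ℓ) * 2 ^ (ℓ + 1) = 2 ^ n := by
        rw [← pow_add]
        congr 1
        omega
      have h2n : (2 : ℝ) ^ n ≠ 0 := by positivity
      have h2m : (2 : ℝ) ^ (n - 1 - ℓ) ≠ 0 := by positivity
      simp only [List.getD]
      field_simp
      linear_combination (s[ℓ + 1]?.getD 0) * hpow
    calc ∑ t, gfun t * cfun t ≤ _ := step1
      _ = _ := by rw [step2, step3, step4, step5]
  -- head of `s` is at most the `i`-th entry of `q`
  have hhead : s.getD 0 0 ≤ q.getD i 0 := by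
    rw [List.getD_eq_getElem q 0 hi]
    have h2 := hfs (σ⁻¹ ⟨i, hi⟩)
    rw [← Equiv.Perm.mul_apply, mul_inv_cancel, Equiv.Perm.one_apply] at h2
    have : q[i] = q.get ⟨i, hi⟩ := rfl
    rw [this, h2]
    have h0 : ((⟨0, hn0⟩ : Fin n) : ℕ) = 0 := rfl
    rw [← h0]
    exact hsge _ _ (by simp [Fin.le_def])
  -- conclude
  have hb' : ∑ ℓ ∈ Finset.range (n - 1), s.getD (ℓ + 1) 0 / 2 ^ (n - 1 - ℓ) < s.getD 0 0 := by
    rw [← hlen] at *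
    exact hbound
  calc Tseq q i = ∑ ℓ ∈ Finset.range i, q.getD ℓ 0 * 2 ^ ℓ / 2 ^ i := by
        rw [tseq_closed, Finset.sum_div]
    _ = ∑ t, gfun (τ t) * cfun t := hLHS.symm
    _ ≤ ∑ t, gfun t * cfun t := key
    _ ≤ ∑ ℓ ∈ Finset.range (n - 1), s.getD (ℓ + 1) 0 / 2 ^ (n - 1 - ℓ) := hRHS
    _ < s.getD 0 0 := hb'
    _ ≤ q.getD i 0 := hhead

lemma overlap_swap (A B C D : List ℝ) (a b c d : ℝ) (i k : ℕ)
    (hA : A.length = i) (hC : C.length = i) (hD : D.length = B.length)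
    (hk : k = i + 2 + B.length) :
    listOverlap (A ++ a :: b :: B) (C ++ c :: d :: D)
      - listOverlap (A ++ b :: a :: B) (C ++ d :: c :: D)
    = (d - c) * Tseq (A ++ a :: b :: B) i / 4
      + (a - b) * ∑ ℓ ∈ Finset.Ico (i + 2) k, (C ++ c :: d :: D).getD ℓ 0 / 2 ^ (ℓ + 1 - i)
      + (c * b - d * a) / 4 := by
  subst hA hk
  exact overlap_swap_aux A B C D a b c d hC hD


theorem exchange_consecutive_jobs
    {J : Type} [Fintype J] [DecidableEq J] {m : ℕ} (hm : 1 ≤ m)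
    (p w : J → ℝ) (hp : ∀ j, 0 < p j) (hw : ∀ j, 0 < w j)
    (S : SyncSchedule J m) (hfeas : S.Feasible p)
    (M : Fin m) (js : List J) (hseq : S.seq M = js)
    (hPTI : PTInclusive (js.map p))
    (k : ℕ) (hk : js.length = k)
    (i : ℕ) (hi : i + 1 < k)
    (x y : J) (hx : js[i]? = some x) (hy : js[i + 1]? = some y) :
    ∃ S' : SyncSchedule J m,
      S'.seq M = js.take i ++ y :: x :: js.drop (i + 2) ∧
      (∀ r : Fin m, r ≠ M → S'.seq r = S.seq r) ∧
      S'.Feasible p ∧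
      S.Omega p w - S'.Omega p w
        = (w y - w x) * Tseq (js.map p) i / 4
          + (p x - p y) *
              ∑ ℓ ∈ Finset.Ico (i + 2) k, (js.map w).getD ℓ 0 / 2 ^ (ℓ + 1 - i)
          + (w x * p y - w y * p x) / 4 := by
  obtain ⟨hxlt, hxe⟩ := List.getElem?_eq_some_iff.mp hx
  obtain ⟨hylt, hye⟩ := List.getElem?_eq_some_iff.mp hy
  have hik : i + 2 ≤ js.length := by omega
  have hjs : js = js.take i ++ x :: y :: js.drop (i + 2) := by
    conv_lhs => rw [← List.take_append_drop i js]
    congr 1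
    rw [List.drop_eq_getElem_cons (by omega : i < js.length), hxe]
    congr 1
    rw [List.drop_eq_getElem_cons (by omega : i + 1 < js.length), hye]
  set js' : List J := js.take i ++ y :: x :: js.drop (i + 2) with hjs'
  have hperm : js'.Perm js := by
    conv_rhs => rw [hjs]
    exact List.Perm.append_left _ (List.Perm.swap x y _)
  have hmem : ∀ (r : Fin m) (j : J), j ∈ Function.update S.seq M js' r ↔ j ∈ S.seq r := by
    intro r j
    rcases eq_or_ne r M with rfl | hr
    · rw [Function.update_self, hseq]
      exact hperm.mem_iff
    · rw [Function.update_of_ne hr]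
  refine ⟨⟨Function.update S.seq M js', ?_, ?_⟩, ?_, ?_, ?_, ?_⟩
  · intro r
    rcases eq_or_ne r M with rfl | hr
    · rw [Function.update_self]
      exact hperm.nodup_iff.mpr (hseq ▸ S.nodup _)
    · rw [Function.update_of_ne hr]
      exact S.nodup r
  · intro r r' j hj hj'
    exact S.disj r r' j ((hmem r j).mp hj) ((hmem r' j).mp hj')
  · exact Function.update_self M js' S.seq
  · intro r hr
    exact Function.update_of_ne hr js' S.seq
  · intro r
    rcases eq_or_ne r M with rfl | hr
    · show ListFeasible ((Function.update S.seq r js' r).map p)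
      rw [Function.update_self]
      obtain ⟨s, hsp, hsort, hb⟩ := hPTI
      refine listFeasible_of_perm (js'.map p) s ((hperm.map p).trans hsp.symm) hsort ?_ hb
      intro z hz
      obtain ⟨j, _, rfl⟩ := List.mem_map.mp (hsp.mem_iff.mp hz)
      exact hp j
    · show ListFeasible ((Function.update S.seq M js' r).map p)
      rw [Function.update_of_ne hr]
      exact hfeas r
  · show S.Omega p w
        - (⟨Function.update S.seq M js', _, _⟩ : SyncSchedule J m).Omega p w = _
    rw [SyncSchedule.Omega, SyncSchedule.Omega, ← Finset.sum_sub_distrib]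
    rw [Finset.sum_eq_single M]
    · show listOverlap ((S.seq M).map p) ((S.seq M).map w)
          - listOverlap ((Function.update S.seq M js' M).map p)
              ((Function.update S.seq M js' M).map w) = _
      rw [Function.update_self, hseq]
      have hqd : js.map p
          = (js.map p).take i ++ p x :: p y :: (js.map p).drop (i + 2) := by
        conv_lhs => rw [hjs]
        simp only [List.map_append, List.map_cons, List.map_take, List.map_drop]
      have hq'd : js'.map p
          = (js.map p).take i ++ p y :: p x :: (js.map p).drop (i + 2) := by
        rw [hjs']
        simp only [List.map_append, List.map_cons, List.map_take, List.map_drop]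
      have hvd : js.map w
          = (js.map w).take i ++ w x :: w y :: (js.map w).drop (i + 2) := by
        conv_lhs => rw [hjs]
        simp only [List.map_append, List.map_cons, List.map_take, List.map_drop]
      have hv'd : js'.map w
          = (js.map w).take i ++ w y :: w x :: (js.map w).drop (i + 2) := by
        rw [hjs']
        simp only [List.map_append, List.map_cons, List.map_take, List.map_drop]
      rw [hqd, hq'd, hvd, hv'd]
      refine overlap_swap _ _ _ _ (p x) (p y) (w x) (w y) i k ?_ ?_ ?_ ?_
      · simp only [List.length_take, List.length_map]
        omega
      · simp only [List.length_take, List.length_map]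
        omega
      · simp only [List.length_drop, List.length_map]
      · simp only [List.length_drop, List.length_map]
        omega
    · intro r _ hr
      show listOverlap ((S.seq r).map p) ((S.seq r).map w)
          - listOverlap ((Function.update S.seq M js' r).map p)
              ((Function.update S.seq M js' r).map w) = 0
      rw [Function.update_of_ne hr, sub_self]
    · intro hM
      exact absurd (Finset.mem_univ M) hM
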